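/- With the same setup as the maximum power curve domination lemma (f a monotonically non-increasing charging power profile, ζ the maximum power curve, ξ any charge curve with 0 < ξ' ≤ f∘ξ and ξ(0)=ζ(0)=0), we have ξ(t) ≤ ζ(t) for all t ≥ 0. -/

import Mathlib

/-- Grönwall-type comparison: any charge curve ξ with 0 < ξ' ≤ f∘ξ
(for a monotonically non-increasing power profile f) is dominated by the maximum power
charge curve ζ solving ζ' = f(ζ), both starting at 0: ξ(t) ≤ ζ(t) for all t ≥ 0. -/
theorem charge_curve_le_max_power_curve
    (f : ℝ → ℝ) (hf : AntitoneOn f (Set.Icc 0 1))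
    (ζ ξ : ℝ → ℝ) (T Tξ : ℝ) (hT : 0 < T) (hTξ : 0 < Tξ)
    (hζ0 : ζ 0 = 0) (hξ0 : ξ 0 = 0)
    (hζrange : ∀ t, 0 ≤ t → ζ t ∈ Set.Icc (0:ℝ) 1)
    (hξrange : ∀ t, 0 ≤ t → ξ t ∈ Set.Icc (0:ℝ) 1)
    (hζode : ∀ t ∈ Set.Ico (0:ℝ) T, HasDerivAt ζ (f (ζ t)) t)
    (hζ1 : ∀ t, T ≤ t → ζ t = 1)
    (hξdiff : ∀ t, 0 ≤ t → DifferentiableAt ℝ ξ t)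
    (hξrate : ∀ t ∈ Set.Ico (0:ℝ) Tξ, 0 < deriv ξ t ∧ deriv ξ t ≤ f (ξ t))
    (hξ1 : ∀ t, Tξ ≤ t → ξ t = 1) :
    ∀ t, 0 ≤ t → ξ t ≤ ζ t := by
  -- core comparison on [0, s] for s < min T Tξ, via an ε-perturbation
  have key : ∀ s, 0 ≤ s → s < T → s < Tξ → ξ s ≤ ζ s := by
    intro s hs0 hsT hsTξ
    have heps : ∀ ε : ℝ, 0 < ε → ξ s ≤ ζ s + ε * s := by
      intro ε hε
      have hcontξ : ContinuousOn ξ (Set.Icc 0 s) := fun x hx =>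
        (hξdiff x hx.1).continuousAt.continuousWithinAt
      have hcontB : ContinuousOn (fun x => ζ x + ε * x) (Set.Icc 0 s) := fun x hx =>
        (((hζode x ⟨hx.1, lt_of_le_of_lt hx.2 hsT⟩).differentiableAt.continuousAt).add
          (continuous_const.mul continuous_id).continuousAt).continuousWithinAt
      have := image_le_of_deriv_right_lt_deriv_boundary' (f := ξ) (f' := deriv ξ)
        (a := 0) (b := s) hcontξ
        (fun x hx => ((hξdiff x hx.1).hasDerivAt).hasDerivWithinAt)
        (by rw [hξ0, hζ0]; simp)
        hcontB
        (B' := fun x => f (ζ x) + ε)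
        (fun x hx => (((hζode x ⟨hx.1, lt_of_lt_of_le hx.2 hsT.le⟩).add
          ((hasDerivAt_id x).const_mul ε)).hasDerivWithinAt).congr_deriv (by ring))
        ?_ ⟨hs0, le_refl s⟩
      · linarith [this]
      · intro x hx heq
        have hx0 : 0 ≤ x := hx.1
        have hxT : x < T := lt_of_lt_of_le hx.2 hsT.le
        have hxTξ : x < Tξ := lt_of_lt_of_le hx.2 hsTξ.le
        have h1 : deriv ξ x ≤ f (ξ x) := (hξrate x ⟨hx0, hxTξ⟩).2
        have h2 : f (ξ x) ≤ f (ζ x) := by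
          apply hf (hζrange x hx0) (hξrange x hx0)
          have : ξ x = ζ x + ε * x := heq
          nlinarith
        calc deriv ξ x ≤ f (ζ x) := h1.trans h2
          _ < f (ζ x) + ε := by linarith
    rcases eq_or_lt_of_le hs0 with h | h
    · rw [← h, hξ0, hζ0]
    · by_contra hc
      push_neg at hc
      have hpos : 0 < ξ s - ζ s := by linarith
      have h2 := heps ((ξ s - ζ s) / (2 * s)) (div_pos hpos (by linarith))
      have : (ξ s - ζ s) / (2 * s) * s = (ξ s - ζ s) / 2 := by field_simp
      nlinarith
  intro t ht
  rcases lt_or_ge t T with htT | htT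
  · rcases lt_or_ge t Tξ with htTξ | htTξ
    · exact key t ht htT htTξ
    · -- t ∈ [Tξ, T); then Tξ < T and we show ζ t = 1
      have hTξT : Tξ < T := lt_of_le_of_lt htTξ htT
      -- ξ Tξ ≤ ζ Tξ by taking limits from the left
      have hζTξ : ζ Tξ = 1 := by
        have hle : ξ Tξ ≤ ζ Tξ := by
          have hcξ : ContinuousAt ξ Tξ := (hξdiff Tξ hTξ.le).continuousAt
          have hcζ : ContinuousAt ζ Tξ :=
            (hζode Tξ ⟨hTξ.le, hTξT⟩).differentiableAt.continuousAt
          refine le_of_tendsto_of_tendsto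
            (hcξ.continuousWithinAt.tendsto (s := Set.Iio Tξ))
            (hcζ.continuousWithinAt.tendsto (s := Set.Iio Tξ)) ?_
          filter_upwards [Ioo_mem_nhdsLT_of_mem (Set.mem_Ioc.mpr ⟨hTξ, le_refl _⟩)]
            with x hx
          exact key x hx.1.le (hx.2.trans hTξT) hx.2
        have h1 : ξ Tξ = 1 := hξ1 Tξ le_rfl
        have h2 : ζ Tξ ≤ 1 := (hζrange Tξ hTξ.le).2
        linarith [h1 ▸ hle]
      -- ζ has a local max at Tξ, so f 1 = 0
      have hf1 : f 1 = 0 := by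
        have hmax : IsLocalMax ζ Tξ := by
          filter_upwards [eventually_gt_nhds hTξ] with x hx
          rw [hζTξ]; exact (hζrange x hx.le).2
        have := hmax.hasDerivAt_eq_zero (hζode Tξ ⟨hTξ.le, hTξT⟩)
        rwa [hζTξ] at this
      -- ζ is monotone on [Tξ, t] since deriv ζ = f ∘ ζ ≥ f 1 = 0 there
      have hmono : MonotoneOn ζ (Set.Icc Tξ t) := by
        apply monotoneOn_of_deriv_nonneg (convex_Icc _ _)
        · exact fun x hx => (hζode x ⟨hTξ.le.trans hx.1,
            lt_of_le_of_lt hx.2 htT⟩).differentiableAt.continuousAt.continuousWithinAt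
        · intro x hx
          rw [interior_Icc] at hx
          exact ((hζode x ⟨hTξ.le.trans hx.1.le,
            lt_trans hx.2 htT⟩).differentiableAt).differentiableWithinAt
        · intro x hx
          rw [interior_Icc] at hx
          have hx0 : (0:ℝ) ≤ x := hTξ.le.trans hx.1.le
          have hd := (hζode x ⟨hx0, lt_trans hx.2 htT⟩).deriv
          rw [hd]
          have : f 1 ≤ f (ζ x) :=
            hf (hζrange x hx0) (Set.mem_Icc.mpr ⟨zero_le_one, le_refl 1⟩)
              (hζrange x hx0).2
          linarith
      have h1 : (1:ℝ) ≤ ζ t := by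
        have := hmono (Set.mem_Icc.mpr ⟨le_refl Tξ, htTξ⟩)
          (Set.mem_Icc.mpr ⟨htTξ, le_refl t⟩) htTξ
        rwa [hζTξ] at this
      rw [hξ1 t htTξ]
      exact h1
  · rw [hζ1 t htT]
    exact (hξrange t ht).2
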